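/- For every function m: ℝ² → ℝ, the function v₁(x, y) := m(y)·ψ(x + β(y₁ + y₂)) + R₁(x, y) satisfies, for all x ∈ ℝ and y = (y₁, y₂) ∈ ℝ², the nonhomogeneous equation (σ²/2)·∂ₓₓv₁(x, y) + k(μ − β(y₁ + y₂) − x)·∂ₓv₁(x, y) − ρ·v₁(x, y) + x·y₁ = 0 (derivatives taken in x only). In particular (taking m ≡ 0) the no-installation profit R₁ is a particular solution of this equation. -/

import Mathlib

noncomputable section

open MeasureTheory

/-- The increasing fundamental solution `ψ` of the Ornstein–Uhlenbeck resolvent equation. -/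
def psi (ρ k σ μ : ℝ) (x : ℝ) : ℝ :=
  (1 / Real.Gamma (ρ / k)) *
    ∫ t in Set.Ioi (0 : ℝ),
      t ^ (ρ / k - 1) * Real.exp (-t ^ 2 / 2 + ((x - μ) * Real.sqrt (2 * k) / σ) * t)

/-- The no-installation expected profit of player 1:
`R₁(x, y₁, y₂) = y₁ (xρ + μk − βk(y₁ + y₂))/(ρ(ρ + k))`. -/
def R1 (ρ k β μ x y₁ y₂ : ℝ) : ℝ :=
  y₁ * (x * ρ + μ * k - β * k * (y₁ + y₂)) / (ρ * (ρ + k))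

/-- `R̃₁(x, y) = x/(ρ+k) + (μk − β(ρ+k)(y₁ + y₂) − βk y₁)/(ρ(ρ+k))`. -/
def R1tilde (ρ k β μ x y₁ y₂ : ℝ) : ℝ :=
  x / (ρ + k) + (μ * k - β * (ρ + k) * (y₁ + y₂) - β * k * y₁) / (ρ * (ρ + k))


namespace OUaux

open Real Set Filter Asymptotics Topology

def J (c b : ℝ) : ℝ := ∫ t in Set.Ioi (0:ℝ), t ^ c * Real.exp (-t ^ 2 / 2 + b * t)

lemma exp_bound (b t : ℝ) :
    Real.exp (-t ^ 2 / 2 + b * t) ≤ Real.exp (b ^ 2) * Real.exp (-(1/4) * t ^ 2) := by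
  rw [← Real.exp_add]
  apply Real.exp_le_exp.2
  nlinarith [sq_nonneg (t/2 - b)]

lemma measAux (c b : ℝ) :
    AEStronglyMeasurable (fun t : ℝ => t ^ c * Real.exp (-t ^ 2 / 2 + b * t))
      (volume.restrict (Set.Ioi (0:ℝ))) := by
  apply ContinuousOn.aestronglyMeasurable _ measurableSet_Ioi
  apply ContinuousOn.mul
  · exact fun t ht => (Real.continuousAt_rpow_const t c (Or.inl (ne_of_gt ht))).continuousWithinAt
  · exact (Real.continuous_exp.comp (by continuity)).continuousOn

lemma intJ (c b : ℝ) (hc : -1 < c) :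
    IntegrableOn (fun t : ℝ => t ^ c * Real.exp (-t ^ 2 / 2 + b * t)) (Set.Ioi 0) := by
  have hint := (integrableOn_rpow_mul_exp_neg_mul_sq (by norm_num : (0:ℝ) < 1/4) hc).const_mul
    (Real.exp (b ^ 2))
  apply Integrable.mono' hint (measAux c b)
  filter_upwards [ae_restrict_mem measurableSet_Ioi] with t ht
  have ht0 : (0:ℝ) ≤ t := le_of_lt ht
  rw [Real.norm_eq_abs, abs_of_nonneg (mul_nonneg (Real.rpow_nonneg ht0 c) (Real.exp_pos _).le)]
  calc t ^ c * Real.exp (-t^2/2 + b*t)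
      ≤ t ^ c * (Real.exp (b^2) * Real.exp (-(1/4)*t^2)) :=
        mul_le_mul_of_nonneg_left (exp_bound b t) (Real.rpow_nonneg ht0 c)
    _ = Real.exp (b^2) * (t ^ c * Real.exp (-(1/4) * t^2)) := by ring

lemma hasDerivAt_J (c : ℝ) (hc : -1 < c) (b₀ : ℝ) :
    HasDerivAt (fun b => J c b) (J (c+1) b₀) b₀ := by
  have key := hasDerivAt_integral_of_dominated_loc_of_deriv_le
    (μ := volume.restrict (Set.Ioi (0:ℝ)))
    (F := fun (b : ℝ) (t : ℝ) => t ^ c * Real.exp (-t ^ 2 / 2 + b * t))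
    (F' := fun (b : ℝ) (t : ℝ) => t ^ (c+1) * Real.exp (-t ^ 2 / 2 + b * t))
    (bound := fun t => t ^ (c+1) * Real.exp (-t ^ 2 / 2 + (|b₀|+1) * t))
    (x₀ := b₀) (Metric.ball_mem_nhds b₀ one_pos)
    (Eventually.of_forall fun b => measAux c b)
    (intJ c b₀ hc)
    (measAux (c+1) b₀)
    ?_ (intJ (c+1) (|b₀|+1) (by linarith)) ?_
  · exact key.2
  · filter_upwards [ae_restrict_mem measurableSet_Ioi] with t ht b hb
    have ht0 : (0:ℝ) < t := ht
    rw [Real.norm_eq_abs,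
      abs_of_nonneg (mul_nonneg (Real.rpow_nonneg ht0.le _) (Real.exp_pos _).le)]
    apply mul_le_mul_of_nonneg_left _ (Real.rpow_nonneg ht0.le _)
    apply Real.exp_le_exp.2
    have hb' : b ≤ |b₀| + 1 := by
      have h2 := mem_ball_iff_norm.1 hb
      rw [Real.norm_eq_abs] at h2
      have h3 := (abs_lt.1 h2).2
      have h4 := le_abs_self b₀
      linarith
    nlinarith
  · filter_upwards [ae_restrict_mem measurableSet_Ioi] with t ht b _
    have ht0 : (0:ℝ) < t := ht
    have h1 : HasDerivAt (fun b : ℝ => -t ^ 2 / 2 + b * t) t b := by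
      simpa using ((hasDerivAt_id b).mul_const t).const_add (-t ^ 2 / 2)
    have h2 := (h1.exp).const_mul (t ^ c)
    refine h2.congr_deriv ?_
    rw [Real.rpow_add_one (ne_of_gt ht0)]
    ring
lemma J_rec (a b : ℝ) (ha : 0 < a) :
    J (a+1) b = b * J a b + a * J (a-1) b := by
  set f : ℝ → ℝ := fun t => t ^ a * Real.exp (-t ^ 2 / 2 + b * t) with hf
  set f' : ℝ → ℝ := fun t =>
    a * (t ^ (a-1) * Real.exp (-t ^ 2 / 2 + b * t))
      + b * (t ^ a * Real.exp (-t ^ 2 / 2 + b * t))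
      - t ^ (a+1) * Real.exp (-t ^ 2 / 2 + b * t) with hf'
  have hderiv : ∀ t ∈ Set.Ioi (0:ℝ), HasDerivAt f (f' t) t := by
    intro t ht
    have ht0 : (0:ℝ) < t := ht
    have h1 : HasDerivAt (fun s : ℝ => s ^ a) (a * t ^ (a-1)) t :=
      Real.hasDerivAt_rpow_const (Or.inl (ne_of_gt ht0))
    have h2 : HasDerivAt (fun s : ℝ => -s ^ 2 / 2 + b * s) (b - t) t := by
      have h2' := (((hasDerivAt_pow 2 t).neg).div_const 2).add ((hasDerivAt_id t).const_mul b)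
      refine h2'.congr_deriv ?_
      push_cast; ring
    have h3 := h1.mul h2.exp
    refine h3.congr_deriv ?_
    simp only [hf']
    rw [Real.rpow_add_one (ne_of_gt ht0)]
    ring
  have hcont : ContinuousWithinAt f (Set.Ici (0:ℝ)) 0 := by
    apply ContinuousAt.continuousWithinAt
    apply ContinuousAt.mul
    · exact Real.continuousAt_rpow_const 0 a (Or.inr ha.le)
    · exact (Real.continuous_exp.comp (by continuity)).continuousAt
  have hint1 := intJ (a-1) b (by linarith)
  have hint2 := intJ a b (by linarith)
  have hint3 := intJ (a+1) b (by linarith)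
  have hint : IntegrableOn f' (Set.Ioi 0) :=
    ((hint1.const_mul a).add (hint2.const_mul b)).sub hint3
  have htendsaux : Tendsto (fun t : ℝ => t ^ a * Real.exp (-(1/4 : ℝ) * t ^ 2))
      atTop (𝓝 0) := by
    apply (rpow_mul_exp_neg_mul_sq_isLittleO_exp_neg (by norm_num) a).tendsto_zero_of_tendsto
    have hlin : Tendsto (fun x : ℝ => -(1/2 : ℝ) * x) atTop atBot :=
      Tendsto.const_mul_atTop_of_neg (by norm_num) tendsto_id
    exact Real.tendsto_exp_atBot.comp hlin
  have hub : Tendsto (fun t : ℝ => Real.exp (b^2) * (t ^ a * Real.exp (-(1/4) * t^2)))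
      atTop (𝓝 (0:ℝ)) := by
    simpa using htendsaux.const_mul (Real.exp (b ^ 2))
  have htends : Tendsto f atTop (𝓝 (0:ℝ)) := by
    apply tendsto_of_tendsto_of_tendsto_of_le_of_le' tendsto_const_nhds hub
    · filter_upwards [eventually_ge_atTop (0:ℝ)] with t ht
      exact mul_nonneg (Real.rpow_nonneg ht _) (Real.exp_pos _).le
    · filter_upwards [eventually_ge_atTop (0:ℝ)] with t ht
      calc f t ≤ t ^ a * (Real.exp (b^2) * Real.exp (-(1/4) * t^2)) :=
            mul_le_mul_of_nonneg_left (exp_bound b t) (Real.rpow_nonneg ht a)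
        _ = Real.exp (b^2) * (t ^ a * Real.exp (-(1/4) * t^2)) := by ring
  have h0 := integral_Ioi_of_hasDerivAt_of_tendsto hcont hderiv hint htends
  have hf0 : f 0 = 0 := by
    simp [hf, Real.zero_rpow (ne_of_gt ha)]
  rw [hf0, sub_zero] at h0
  have h0' : (∫ t in Set.Ioi (0:ℝ), f' t) = a * J (a-1) b + b * J a b - J (a+1) b := by
    simp only [hf']
    have hadd : Integrable (fun t : ℝ => a * (t ^ (a-1) * Real.exp (-t ^ 2 / 2 + b * t))
        + b * (t ^ a * Real.exp (-t ^ 2 / 2 + b * t))) (volume.restrict (Set.Ioi 0)) :=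
      (hint1.const_mul a).add (hint2.const_mul b)
    rw [integral_sub hadd hint3,
      integral_add (hint1.const_mul a) (hint2.const_mul b),
      integral_const_mul, integral_const_mul]
    rfl
  rw [h0'] at h0
  linarith


def psiD (ρ k σ μ : ℝ) (x : ℝ) : ℝ :=
  (1 / Real.Gamma (ρ / k)) * (Real.sqrt (2*k) / σ) * J (ρ/k) ((x - μ) * Real.sqrt (2*k) / σ)

def psiD2 (ρ k σ μ : ℝ) (x : ℝ) : ℝ :=
  (1 / Real.Gamma (ρ / k)) * (Real.sqrt (2*k) / σ) * (Real.sqrt (2*k) / σ) *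
    J (ρ/k + 1) ((x - μ) * Real.sqrt (2*k) / σ)

lemma psi_eq (ρ k σ μ x : ℝ) :
    psi ρ k σ μ x = (1 / Real.Gamma (ρ / k)) * J (ρ/k - 1) ((x - μ) * Real.sqrt (2*k) / σ) := rfl

lemma hasDerivAt_b (k σ μ : ℝ) (x : ℝ) :
    HasDerivAt (fun x : ℝ => (x - μ) * Real.sqrt (2*k) / σ) (Real.sqrt (2*k) / σ) x := by
  simpa using (((hasDerivAt_id x).sub_const μ).mul_const (Real.sqrt (2*k))).div_const σ

lemma hasDerivAt_psi (ρ k σ μ : ℝ) (hρ : 0 < ρ) (hk : 0 < k) (x : ℝ) :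
    HasDerivAt (psi ρ k σ μ) (psiD ρ k σ μ x) x := by
  have ha : 0 < ρ / k := div_pos hρ hk
  have hJ := (hasDerivAt_J (ρ/k - 1) (by linarith) ((x - μ) * Real.sqrt (2*k) / σ)).comp x
    (hasDerivAt_b k σ μ x)
  have h2 : HasDerivAt (psi ρ k σ μ)
      ((1 / Real.Gamma (ρ / k)) *
        (J (ρ/k - 1 + 1) ((x - μ) * Real.sqrt (2*k) / σ) * (Real.sqrt (2*k) / σ))) x :=
    hJ.const_mul _
  convert h2 using 1
  rw [psiD, show ρ/k - 1 + 1 = ρ/k by ring]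
  ring

lemma hasDerivAt_psiD (ρ k σ μ : ℝ) (hρ : 0 < ρ) (hk : 0 < k) (x : ℝ) :
    HasDerivAt (psiD ρ k σ μ) (psiD2 ρ k σ μ x) x := by
  have ha : 0 < ρ / k := div_pos hρ hk
  have hJ := (hasDerivAt_J (ρ/k) (by linarith) ((x - μ) * Real.sqrt (2*k) / σ)).comp x
    (hasDerivAt_b k σ μ x)
  have h2 : HasDerivAt (psiD ρ k σ μ)
      ((1 / Real.Gamma (ρ / k)) * (Real.sqrt (2*k) / σ) *
        (J (ρ/k + 1) ((x - μ) * Real.sqrt (2*k) / σ) * (Real.sqrt (2*k) / σ))) x :=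
    hJ.const_mul _
  convert h2 using 1
  rw [psiD2]
  ring

lemma psi_ode (ρ k σ μ : ℝ) (hρ : 0 < ρ) (hk : 0 < k) (hσ : 0 < σ) (x : ℝ) :
    σ^2/2 * psiD2 ρ k σ μ x + k * (μ - x) * psiD ρ k σ μ x - ρ * psi ρ k σ μ x = 0 := by
  have ha : 0 < ρ / k := div_pos hρ hk
  have hrec := J_rec (ρ/k) ((x - μ) * Real.sqrt (2*k) / σ) ha
  have hka : k * (ρ/k) = ρ := by field_simp
  have hq2 : (Real.sqrt (2*k)/σ) * (Real.sqrt (2*k)/σ) = 2*k/σ^2 := by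
    rw [div_mul_div_comm, Real.mul_self_sqrt (by linarith), ← sq]
  have hσ' : σ ≠ 0 := ne_of_gt hσ
  have hk3 : σ^2/2 * (2*k/σ^2) = k := by
    field_simp
  rw [psi_eq, psiD, psiD2, hrec]
  linear_combination (σ^2/2 * (1 / Real.Gamma (ρ / k)) *
      ((x - μ) * Real.sqrt (2*k) / σ * J (ρ/k) ((x - μ) * Real.sqrt (2*k) / σ)
        + (ρ/k) * J (ρ/k - 1) ((x - μ) * Real.sqrt (2*k) / σ))) * hq2
    + ((1 / Real.Gamma (ρ / k)) *
      ((x - μ) * Real.sqrt (2*k) / σ * J (ρ/k) ((x - μ) * Real.sqrt (2*k) / σ)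
        + (ρ/k) * J (ρ/k - 1) ((x - μ) * Real.sqrt (2*k) / σ))) * hk3
    + ((1 / Real.Gamma (ρ / k)) * J (ρ/k - 1) ((x - μ) * Real.sqrt (2*k) / σ)) * hka
end OUaux

open OUaux
/-- For any `m : ℝ² → ℝ`, the function `v₁(x, y) = m(y)ψ(x + β(y₁ + y₂)) + R₁(x, y)`
satisfies `(σ²/2)∂ₓₓv₁ + k(μ − β(y₁+y₂) − x)∂ₓv₁ − ρv₁ + xy₁ = 0` (derivatives in `x`);
in particular (`m ≡ 0`) `R₁` is a particular solution of this equation. -/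
theorem stmt12 (ρ k σ β μ : ℝ) (hρ : 0 < ρ) (hk : 0 < k) (hσ : 0 < σ) (hβ : 0 < β)
    (m : ℝ × ℝ → ℝ) (y₁ y₂ x : ℝ) :
    (σ ^ 2 / 2 *
        deriv (deriv (fun z : ℝ =>
          m (y₁, y₂) * psi ρ k σ μ (z + β * (y₁ + y₂)) + R1 ρ k β μ z y₁ y₂)) x
      + k * (μ - β * (y₁ + y₂) - x) *
        deriv (fun z : ℝ =>
          m (y₁, y₂) * psi ρ k σ μ (z + β * (y₁ + y₂)) + R1 ρ k β μ z y₁ y₂) x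
      - ρ * (m (y₁, y₂) * psi ρ k σ μ (x + β * (y₁ + y₂)) + R1 ρ k β μ x y₁ y₂)
      + x * y₁ = 0) ∧
    (σ ^ 2 / 2 * deriv (deriv (fun z : ℝ => R1 ρ k β μ z y₁ y₂)) x
      + k * (μ - β * (y₁ + y₂) - x) * deriv (fun z : ℝ => R1 ρ k β μ z y₁ y₂) x
      - ρ * R1 ρ k β μ x y₁ y₂ + x * y₁ = 0) := by
  have hρ' : ρ ≠ 0 := ne_of_gt hρ
  have hρk : ρ + k ≠ 0 := by positivity
  -- derivative of R1 in x
  have hR : ∀ z : ℝ, HasDerivAt (fun z : ℝ => R1 ρ k β μ z y₁ y₂)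
      (y₁ * (1 * ρ) / (ρ * (ρ + k))) z := by
    intro z
    exact ((((hasDerivAt_id z).mul_const ρ).add_const (μ * k)).sub_const
      (β * k * (y₁ + y₂))).const_mul y₁ |>.div_const (ρ * (ρ + k))
  have hdR : deriv (fun z : ℝ => R1 ρ k β μ z y₁ y₂)
      = fun _ : ℝ => y₁ * (1 * ρ) / (ρ * (ρ + k)) := funext fun z => (hR z).deriv
  have halg : k * (μ - β * (y₁ + y₂) - x) * (y₁ * (1 * ρ) / (ρ * (ρ + k)))
      - ρ * R1 ρ k β μ x y₁ y₂ + x * y₁ = 0 := by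
    rw [R1]
    field_simp
    ring
  constructor
  · -- first conjunct
    set c := β * (y₁ + y₂) with hc
    set M := m (y₁, y₂) with hM
    have hv : ∀ z : ℝ, HasDerivAt (fun z : ℝ =>
        M * psi ρ k σ μ (z + c) + R1 ρ k β μ z y₁ y₂)
        (M * (psiD ρ k σ μ (z + c) * 1) + y₁ * (1 * ρ) / (ρ * (ρ + k))) z := by
      intro z
      exact ((((hasDerivAt_psi ρ k σ μ hρ hk (z + c)).comp z
        ((hasDerivAt_id z).add_const c)).const_mul M)).add (hR z)
    have hd1 : deriv (fun z : ℝ => M * psi ρ k σ μ (z + c) + R1 ρ k β μ z y₁ y₂)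
        = fun z : ℝ => M * (psiD ρ k σ μ (z + c) * 1) + y₁ * (1 * ρ) / (ρ * (ρ + k)) :=
      funext fun z => (hv z).deriv
    have hv2 : HasDerivAt (fun z : ℝ =>
        M * (psiD ρ k σ μ (z + c) * 1) + y₁ * (1 * ρ) / (ρ * (ρ + k)))
        (M * (psiD2 ρ k σ μ (x + c) * 1 * 1)) x := by
      have h := (((hasDerivAt_psiD ρ k σ μ hρ hk (x + c)).comp x
        ((hasDerivAt_id x).add_const c)).mul_const 1).const_mul M |>.add_const
        (y₁ * (1 * ρ) / (ρ * (ρ + k)))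
      exact h
    rw [hd1, hv2.deriv]
    have hode := psi_ode ρ k σ μ hρ hk hσ (x + c)
    linear_combination M * hode + halg
  · rw [hdR, deriv_const]
    linarith [halg]
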